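/- For the process Z(t) = exp(√2·B₁(t) − t²), t ∈ ℝ, where B₁(t) = t·N with N standard normal (fBm with H = 1), the Berman function over [0,T] with T > x ≥ 0 satisfies B_Z([0,T], x) = 2Ψ(x/√2) + √2(T − x)φ(x/√2), where φ and Ψ are the standard normal density and survival functions. Consequently lim_{T→∞} B_Z([0,T], x)/T = √2·φ(x/√2). -/

import Mathlib

open MeasureTheory ProbabilityTheory Filter
open scoped NNReal ENNReal

noncomputable def rStar (x T m : ℝ) : ℝ :=
  if m ≤ x / 2 then x - m else if m ≤ T - x / 2 then x / 2 else x - T + m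

noncomputable def sStar (x T n : ℝ) : ℝ :=
  Real.exp ((n / Real.sqrt 2) ^ 2 - rStar x T (n / Real.sqrt 2) ^ 2)

noncomputable def phiD (u : ℝ) : ℝ := (Real.sqrt (2 * Real.pi))⁻¹ * Real.exp (-u ^ 2 / 2)

lemma rStar_nonneg {x T : ℝ} (hx : 0 ≤ x) (hT : x < T) (m : ℝ) : 0 ≤ rStar x T m := by
  unfold rStar; split_ifs <;> linarith

lemma key_len {x T : ℝ} (hx : 0 ≤ x) (hT : x < T) (m r : ℝ) :
    x < min T (m + r) - max 0 (m - r) ↔ rStar x T m < r := by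
  unfold rStar
  rcases le_total T (m + r) with hmin | hmin
  · rw [min_eq_left hmin]
    rcases le_total (0:ℝ) (m - r) with hmax | hmax
    · rw [max_eq_right hmax]; split_ifs with h1 h2 <;> constructor <;> intro <;> linarith
    · rw [max_eq_left hmax]; split_ifs with h1 h2 <;> constructor <;> intro <;> linarith
  · rw [min_eq_right hmin]
    rcases le_total (0:ℝ) (m - r) with hmax | hmax
    · rw [max_eq_right hmax]; split_ifs with h1 h2 <;> constructor <;> intro <;> linarith
    · rw [max_eq_left hmax]; split_ifs with h1 h2 <;> constructor <;> intro <;> linarith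

lemma vol_iff {x T : ℝ} (hx : 0 ≤ x) (hT : x < T) (n s : ℝ) (hs : 0 < s) :
    (ENNReal.ofReal x <
        volume {t ∈ Set.Icc (0:ℝ) T | s < Real.exp (Real.sqrt 2 * t * n - t ^ 2)}) ↔
      s < sStar x T n := by
  have h2 : Real.sqrt 2 * Real.sqrt 2 = 2 := Real.mul_self_sqrt (by norm_num)
  have hsq2 : (0:ℝ) < Real.sqrt 2 := Real.sqrt_pos.mpr (by norm_num)
  set m := n / Real.sqrt 2 with hm
  have hn : n = Real.sqrt 2 * m := by
    rw [hm, mul_div_assoc', mul_comm, mul_div_assoc, div_self (ne_of_gt hsq2), mul_one]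
  have hexp : ∀ t : ℝ, Real.sqrt 2 * t * n - t ^ 2 = m ^ 2 - (t - m) ^ 2 := by
    intro t; rw [hn]; linear_combination t * m * h2
  have hset : ∀ t : ℝ, (s < Real.exp (Real.sqrt 2 * t * n - t ^ 2)) ↔
      (t - m) ^ 2 < m ^ 2 - Real.log s := by
    intro t
    rw [hexp t, ← Real.log_lt_iff_lt_exp hs]
    constructor <;> intro <;> linarith
  set d := m ^ 2 - Real.log s with hd
  rcases le_or_gt d 0 with hdle | hdpos
  · have hempty : {t ∈ Set.Icc (0:ℝ) T | s < Real.exp (Real.sqrt 2 * t * n - t ^ 2)} = ∅ := by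
      ext t
      simp only [Set.mem_setOf_eq, Set.mem_empty_iff_false, iff_false, not_and]
      intro _ h
      have := (hset t).mp h
      nlinarith [sq_nonneg (t - m)]
    rw [hempty]
    simp only [measure_empty]
    constructor
    · intro h; exact absurd h (by simp)
    · intro h
      exfalso
      have hle : sStar x T n ≤ s := by
        unfold sStar
        have h1 : m ^ 2 - rStar x T m ^ 2 ≤ Real.log s := by
          nlinarith [sq_nonneg (rStar x T m)]
        calc Real.exp (m ^ 2 - rStar x T m ^ 2) ≤ Real.exp (Real.log s) :=
              Real.exp_le_exp.mpr h1
          _ = s := Real.exp_log hs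
      linarith
  · set r := Real.sqrt d with hr
    have hrpos : 0 < r := Real.sqrt_pos.mpr hdpos
    have hrsq : r ^ 2 = d := Real.sq_sqrt hdpos.le
    have hset2 : {t ∈ Set.Icc (0:ℝ) T | s < Real.exp (Real.sqrt 2 * t * n - t ^ 2)} =
        Set.Icc 0 T ∩ Set.Ioo (m - r) (m + r) := by
      ext t
      simp only [Set.mem_setOf_eq, Set.mem_inter_iff, Set.mem_Icc, Set.mem_Ioo]
      rw [hset t, ← hrsq]
      constructor
      · rintro ⟨ht, hlt⟩
        exact ⟨ht, by nlinarith [sq_nonneg (t - m + r)], by nlinarith [sq_nonneg (t - m - r)]⟩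
      · rintro ⟨ht, h1, h2'⟩
        exact ⟨ht, by nlinarith⟩
    rw [hset2]
    have hvol : volume (Set.Icc 0 T ∩ Set.Ioo (m - r) (m + r)) =
        ENNReal.ofReal (min T (m + r) - max 0 (m - r)) := by
      apply le_antisymm
      · calc volume (Set.Icc 0 T ∩ Set.Ioo (m - r) (m + r))
            ≤ volume (Set.Icc (max 0 (m - r)) (min T (m + r))) := by
              apply measure_mono
              rintro t ⟨⟨h1, h2'⟩, h3, h4⟩
              exact ⟨max_le h1 h3.le, le_min h2' h4.le⟩
          _ = ENNReal.ofReal (min T (m + r) - max 0 (m - r)) := Real.volume_Icc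
      · calc ENNReal.ofReal (min T (m + r) - max 0 (m - r))
            = volume (Set.Ioo (max 0 (m - r)) (min T (m + r))) := (Real.volume_Ioo).symm
          _ ≤ volume (Set.Icc 0 T ∩ Set.Ioo (m - r) (m + r)) := by
              apply measure_mono
              rintro t ⟨h1, h2'⟩
              have ha := max_lt_iff.mp h1
              have hb := lt_min_iff.mp h2'
              exact ⟨⟨ha.1.le, hb.1.le⟩, ha.2, hb.2⟩
    rw [hvol, ENNReal.ofReal_lt_ofReal_iff_of_nonneg hx, key_len hx hT m r, hr,
      Real.lt_sqrt (rStar_nonneg hx hT m)]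
    unfold sStar
    rw [← Real.log_lt_iff_lt_exp hs, ← hm]
    constructor <;> intro <;> linarith [hd]

lemma pdf_eq_phiD : gaussianPDFReal 0 1 = phiD := by
  funext y
  simp [gaussianPDFReal, phiD]

lemma integrable_phiD : Integrable phiD := by
  have h : Integrable (fun u : ℝ => Real.exp (-(1/2 : ℝ) * u ^ 2)) :=
    integrable_exp_neg_mul_sq (by norm_num)
  have h2 := h.const_mul (Real.sqrt (2 * Real.pi))⁻¹
  refine h2.congr (Filter.Eventually.of_forall fun u => ?_)
  unfold phiD
  ring_nf

lemma phiD_even (u : ℝ) : phiD (-u) = phiD u := by simp [phiD]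

lemma setIntegral_Iic_shift (f : ℝ → ℝ) (c d : ℝ) :
    ∫ y in Set.Iic c, f (y - d) = ∫ y in Set.Iic (c - d), f y := by
  have A : MeasurableEmbedding (fun y : ℝ => y - d) :=
    (Homeomorph.subRight d).isClosedEmbedding.measurableEmbedding
  have hmap : Measure.map (fun y : ℝ => y - d) volume = volume := by
    simp_rw [sub_eq_add_neg]
    exact map_add_right_eq_self volume (-d)
  have hpre : (fun y : ℝ => y - d) ⁻¹' Set.Iic (c - d) = Set.Iic c := by
    ext y; simp [sub_le_sub_iff_right]
  calc ∫ y in Set.Iic c, f (y - d)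
      = ∫ z in (fun y : ℝ => y - d) ⁻¹' Set.Iic (c - d), f (z - d) := by rw [hpre]
    _ = ∫ y in Set.Iic (c - d), f y ∂(Measure.map (fun y : ℝ => y - d) volume) :=
        (A.setIntegral_map f _).symm
    _ = ∫ y in Set.Iic (c - d), f y := by rw [hmap]

lemma setIntegral_Ioi_shift (f : ℝ → ℝ) (c d : ℝ) :
    ∫ y in Set.Ioi c, f (y - d) = ∫ y in Set.Ioi (c - d), f y := by
  have A : MeasurableEmbedding (fun y : ℝ => y - d) :=
    (Homeomorph.subRight d).isClosedEmbedding.measurableEmbedding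
  have hmap : Measure.map (fun y : ℝ => y - d) volume = volume := by
    simp_rw [sub_eq_add_neg]
    exact map_add_right_eq_self volume (-d)
  have hpre : (fun y : ℝ => y - d) ⁻¹' Set.Ioi (c - d) = Set.Ioi c := by
    ext y; simp [sub_lt_sub_iff_right]
  calc ∫ y in Set.Ioi c, f (y - d)
      = ∫ z in (fun y : ℝ => y - d) ⁻¹' Set.Ioi (c - d), f (z - d) := by rw [hpre]
    _ = ∫ y in Set.Ioi (c - d), f y ∂(Measure.map (fun y : ℝ => y - d) volume) :=
        (A.setIntegral_map f _).symm
    _ = ∫ y in Set.Ioi (c - d), f y := by rw [hmap]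

lemma int_Iic_neg_phiD (c : ℝ) : ∫ y in Set.Iic (-c), phiD y = ∫ y in Set.Ioi c, phiD y := by
  rw [← integral_comp_neg_Ioi]
  exact setIntegral_congr_fun measurableSet_Ioi fun y _ => phiD_even y

lemma exparg (x n : ℝ) :
    -(n ^ 2) / 2 + ((n / Real.sqrt 2) ^ 2 - (x - n / Real.sqrt 2) ^ 2) =
      -((n - Real.sqrt 2 * x) ^ 2) / 2 := by
  have h0 : Real.sqrt 2 ≠ 0 := by positivity
  have hns : (n / Real.sqrt 2) ^ 2 = n ^ 2 / 2 := by
    rw [div_pow, Real.sq_sqrt (by norm_num : (0:ℝ) ≤ 2)]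
  have key : n - Real.sqrt 2 * x = Real.sqrt 2 * (n / Real.sqrt 2 - x) := by field_simp
  rw [key, mul_pow, Real.sq_sqrt (by norm_num : (0:ℝ) ≤ 2), hns]
  ring

lemma phiD_mul_exp (u v : ℝ) :
    phiD u * Real.exp v = (Real.sqrt (2 * Real.pi))⁻¹ * Real.exp (-(u ^ 2) / 2 + v) := by
  unfold phiD
  rw [mul_assoc, ← Real.exp_add]

lemma measurable_sStar (x T : ℝ) : Measurable (sStar x T) := by
  unfold sStar rStar
  apply Real.measurable_exp.comp
  apply Measurable.sub (by fun_prop)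
  apply Measurable.pow _ measurable_const
  exact Measurable.ite (measurableSet_le (by fun_prop) measurable_const) (by fun_prop)
    (Measurable.ite (measurableSet_le (by fun_prop) measurable_const) (by fun_prop) (by fun_prop))

lemma gauss_pieces {x T : ℝ} (hx : 0 ≤ x) (hT : x < T) :
    Integrable (fun n => phiD n * sStar x T n) volume ∧
    ∫ n, phiD n * sStar x T n =
      2 * (∫ y in Set.Ioi (x / Real.sqrt 2), phiD y) +
        Real.sqrt 2 * (T - x) * phiD (x / Real.sqrt 2) := by
  have h2 : Real.sqrt 2 * Real.sqrt 2 = 2 := Real.mul_self_sqrt (by norm_num)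
  have hsq2 : (0:ℝ) < Real.sqrt 2 := Real.sqrt_pos.mpr (by norm_num)
  set G := fun n => phiD n * sStar x T n with hG
  set a := x / 2 * Real.sqrt 2 with ha
  set b := (T - x / 2) * Real.sqrt 2 with hb
  have hab : a ≤ b := by
    rw [ha, hb]
    have : x / 2 ≤ T - x / 2 := by linarith
    nlinarith
  have hxa : x / Real.sqrt 2 = a := by
    rw [ha, div_eq_iff (ne_of_gt hsq2), mul_assoc, h2]
    ring
  have hns : ∀ n : ℝ, (n / Real.sqrt 2) ^ 2 = n ^ 2 / 2 := fun n => by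
    rw [div_pow, Real.sq_sqrt (by norm_num : (0:ℝ) ≤ 2)]
  have e1 : Set.EqOn G (fun n => phiD (n - Real.sqrt 2 * x)) (Set.Iic a) := by
    intro n hn
    have hm : n / Real.sqrt 2 ≤ x / 2 := (div_le_iff₀ hsq2).mpr hn
    show phiD n * sStar x T n = phiD (n - Real.sqrt 2 * x)
    unfold sStar rStar
    rw [if_pos hm, phiD_mul_exp, exparg x n]
    unfold phiD
    norm_num
  have e2 : Set.EqOn G (fun _ => phiD (x / Real.sqrt 2)) (Set.Ioc a b) := by
    rintro n ⟨hna, hnb⟩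
    have h1 : ¬ (n / Real.sqrt 2 ≤ x / 2) := by
      intro h; have := (div_le_iff₀ hsq2).mp h; rw [← ha] at this; linarith
    have h2' : n / Real.sqrt 2 ≤ T - x / 2 := (div_le_iff₀ hsq2).mpr hnb
    show phiD n * sStar x T n = phiD (x / Real.sqrt 2)
    unfold sStar rStar
    rw [if_neg h1, if_pos h2', phiD_mul_exp]
    unfold phiD
    congr 1
    rw [hns n, hns x]
    ring
  have e3 : Set.EqOn G (fun n => phiD (n - Real.sqrt 2 * (T - x))) (Set.Ioi b) := by
    intro n hn
    have hnb : (b:ℝ) < n := hn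
    have h1 : ¬ (n / Real.sqrt 2 ≤ x / 2) := by
      intro h; have := (div_le_iff₀ hsq2).mp h; rw [← ha] at this; linarith
    have h2' : ¬ (n / Real.sqrt 2 ≤ T - x / 2) := by
      intro h; have := (div_le_iff₀ hsq2).mp h; rw [← hb] at this; linarith
    show phiD n * sStar x T n = phiD (n - Real.sqrt 2 * (T - x))
    unfold sStar rStar
    rw [if_neg h1, if_neg h2', phiD_mul_exp,
      show (-(n ^ 2) / 2 + ((n / Real.sqrt 2) ^ 2 - (x - T + n / Real.sqrt 2) ^ 2)) =
        -((n - Real.sqrt 2 * (T - x)) ^ 2) / 2 from by linear_combination exparg (T - x) n]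
    unfold phiD
    norm_num
  have hshift1 : Integrable (fun n : ℝ => phiD (n - Real.sqrt 2 * x)) :=
    integrable_phiD.comp_sub_right _
  have hshift3 : Integrable (fun n : ℝ => phiD (n - Real.sqrt 2 * (T - x))) :=
    integrable_phiD.comp_sub_right _
  have hI1 : IntegrableOn G (Set.Iic a) :=
    (hshift1.integrableOn).congr_fun e1.symm measurableSet_Iic
  have hI2 : IntegrableOn G (Set.Ioc a b) := by
    refine (IntegrableOn.congr_fun ?_ e2.symm measurableSet_Ioc)
    exact (integrableOn_const_iff).mpr (Or.inr (by rw [Real.volume_Ioc]; exact ENNReal.ofReal_lt_top))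
  have hI3 : IntegrableOn G (Set.Ioi b) :=
    (hshift3.integrableOn).congr_fun e3.symm measurableSet_Ioi
  have hIoi : IntegrableOn G (Set.Ioi a) := by
    rw [← Set.Ioc_union_Ioi_eq_Ioi hab]
    exact hI2.union hI3
  have hGint : Integrable G := by
    rw [← integrableOn_univ, ← Set.Iic_union_Ioi (a := a)]
    exact hI1.union hIoi
  refine ⟨hGint, ?_⟩
  have hsplit : ∫ n, G n =
      (∫ n in Set.Iic a, G n) + ((∫ n in Set.Ioc a b, G n) + (∫ n in Set.Ioi b, G n)) := by
    rw [← intervalIntegral.integral_Iic_add_Ioi hI1 hIoi]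
    congr 1
    rw [← setIntegral_union Set.Ioc_disjoint_Ioi_same measurableSet_Ioi hI2 hI3,
      Set.Ioc_union_Ioi_eq_Ioi hab]
  have P1 : ∫ n in Set.Iic a, G n = ∫ y in Set.Ioi (x / Real.sqrt 2), phiD y := by
    rw [setIntegral_congr_fun measurableSet_Iic e1,
      setIntegral_Iic_shift phiD a (Real.sqrt 2 * x)]
    have hh : a - Real.sqrt 2 * x = -(x / 2 * Real.sqrt 2) := by rw [ha]; ring
    rw [hh, int_Iic_neg_phiD, hxa]
  have P2 : ∫ n in Set.Ioc a b, G n = Real.sqrt 2 * (T - x) * phiD (x / Real.sqrt 2) := by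
    rw [setIntegral_congr_fun measurableSet_Ioc e2, setIntegral_const]
    have hba : b - a = Real.sqrt 2 * (T - x) := by rw [ha, hb]; ring
    rw [measureReal_def, Real.volume_Ioc, ENNReal.toReal_ofReal (by linarith), smul_eq_mul, hba]
  have P3 : ∫ n in Set.Ioi b, G n = ∫ y in Set.Ioi (x / Real.sqrt 2), phiD y := by
    rw [setIntegral_congr_fun measurableSet_Ioi e3,
      setIntegral_Ioi_shift phiD b (Real.sqrt 2 * (T - x))]
    have hh : b - Real.sqrt 2 * (T - x) = x / 2 * Real.sqrt 2 := by rw [hb]; ring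
    rw [hh, hxa]
  rw [hsplit, P1, P2, P3]
  ring

lemma integrable_sStar_gauss {x T : ℝ} (hx : 0 ≤ x) (hT : x < T) :
    Integrable (sStar x T) (gaussianReal 0 1) := by
  rw [gaussianReal_of_var_ne_zero 0 one_ne_zero,
    integrable_withDensity_iff (measurable_gaussianPDF 0 1)
      (Filter.Eventually.of_forall fun y => ENNReal.ofReal_lt_top)]
  refine (gauss_pieces hx hT).1.congr (Filter.Eventually.of_forall fun n => ?_)
  show phiD n * sStar x T n = sStar x T n * (gaussianPDF 0 1 n).toReal
  rw [show gaussianPDF 0 1 n = ENNReal.ofReal (gaussianPDFReal 0 1 n) from rfl,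
    ENNReal.toReal_ofReal (gaussianPDFReal_nonneg 0 1 n),
    congrFun pdf_eq_phiD n, mul_comm]

lemma integral_sStar_gauss {x T : ℝ} (hx : 0 ≤ x) (hT : x < T) :
    ∫ n, sStar x T n ∂(gaussianReal 0 1) =
      2 * (∫ y in Set.Ioi (x / Real.sqrt 2), phiD y) +
        Real.sqrt 2 * (T - x) * phiD (x / Real.sqrt 2) := by
  rw [gaussianReal_of_var_ne_zero 0 one_ne_zero]
  have hwd : volume.withDensity (gaussianPDF 0 1) =
      volume.withDensity (fun y => ((Real.toNNReal (gaussianPDFReal 0 1 y) : ℝ≥0) : ℝ≥0∞)) := rfl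
  rw [hwd, integral_withDensity_eq_integral_smul
    ((measurable_gaussianPDFReal 0 1).real_toNNReal) (sStar x T)]
  rw [← (gauss_pieces hx hT).2]
  congr 1
  funext n
  rw [NNReal.smul_def, Real.coe_toNNReal _ (gaussianPDFReal_nonneg 0 1 n),
    congrFun pdf_eq_phiD n, smul_eq_mul]

/-- For `Z(t) = exp(√2·t·N − t²)` with `N` standard normal (fBm with `H = 1`):
`B_Z([0,T],x) = 2Ψ(x/√2) + √2(T−x)φ(x/√2)` for `T > x ≥ 0`, and consequently
`B_Z([0,T],x)/T → √2·φ(x/√2)` as `T → ∞`. -/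
theorem stmt12 {Ω : Type*} [MeasurableSpace Ω] (μ : Measure Ω) [IsProbabilityMeasure μ]
    (N : Ω → ℝ) (hN : Measurable N)
    (hNlaw : Measure.map N μ = gaussianReal 0 1)
    (φ Ψ : ℝ → ℝ)
    (hφ : ∀ u, φ u = (Real.sqrt (2 * Real.pi))⁻¹ * Real.exp (-u ^ 2 / 2))
    (hΨ : ∀ u, Ψ u = ∫ y in Set.Ioi u, φ y)
    (x : ℝ) (hx : 0 ≤ x)
    (B : ℝ → ℝ)
    (hB : ∀ T : ℝ, B T =
      ∫ s in Set.Ioi (0 : ℝ),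
        (μ {ω | ENNReal.ofReal x <
          volume {t ∈ Set.Icc (0 : ℝ) T |
            s < Real.exp (Real.sqrt 2 * t * N ω - t ^ 2)}}).toReal) :
    (∀ T : ℝ, x < T →
        B T = 2 * Ψ (x / Real.sqrt 2) + Real.sqrt 2 * (T - x) * φ (x / Real.sqrt 2)) ∧
      Tendsto (fun T => B T / T) atTop (nhds (Real.sqrt 2 * φ (x / Real.sqrt 2))) := by
  have hmain : ∀ T : ℝ, x < T →
      B T = 2 * Ψ (x / Real.sqrt 2) + Real.sqrt 2 * (T - x) * φ (x / Real.sqrt 2) := by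
    intro T hT
    have hgint : Integrable (sStar x T) (gaussianReal 0 1) := integrable_sStar_gauss hx hT
    have hfint : Integrable (fun ω => sStar x T (N ω)) μ :=
      (integrable_map_measure (measurable_sStar x T).aestronglyMeasurable hN.aemeasurable).mp
        (by rw [hNlaw]; exact hgint)
    have heq : B T = ∫ ω, sStar x T (N ω) ∂μ := by
      rw [hB T]
      have hcong : Set.EqOn
          (fun s => (μ {ω | ENNReal.ofReal x <
            volume {t ∈ Set.Icc (0 : ℝ) T |
              s < Real.exp (Real.sqrt 2 * t * N ω - t ^ 2)}}).toReal)
          (fun s => (μ {ω | s < sStar x T (N ω)}).toReal) (Set.Ioi 0) := by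
        intro s hs
        simp only
        congr 1
        apply congrArg
        ext ω
        simp only [Set.mem_setOf_eq]
        exact vol_iff hx hT (N ω) s hs
      rw [setIntegral_congr_fun measurableSet_Ioi hcong]
      exact (Integrable.integral_eq_integral_meas_lt hfint
        (Filter.Eventually.of_forall fun ω => (Real.exp_pos _).le)).symm
    rw [heq, ← integral_map hN.aemeasurable (measurable_sStar x T).aestronglyMeasurable, hNlaw,
      integral_sStar_gauss hx hT]
    have hΨd : Ψ (x / Real.sqrt 2) = ∫ y in Set.Ioi (x / Real.sqrt 2), phiD y := by
      rw [hΨ]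
      exact setIntegral_congr_fun measurableSet_Ioi fun y _ => by rw [hφ y]; rfl
    have hφd : φ (x / Real.sqrt 2) = phiD (x / Real.sqrt 2) := by rw [hφ]; rfl
    rw [hΨd, hφd]
  refine ⟨hmain, ?_⟩
  have hev : (fun T => (2 * Ψ (x / Real.sqrt 2) - Real.sqrt 2 * φ (x / Real.sqrt 2) * x) / T
        + Real.sqrt 2 * φ (x / Real.sqrt 2)) =ᶠ[atTop] (fun T => B T / T) := by
    filter_upwards [eventually_gt_atTop x] with T hT
    have hT0 : (0:ℝ) < T := lt_of_le_of_lt hx hT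
    rw [hmain T hT]
    field_simp
    ring
  have hlim : Tendsto (fun T : ℝ => (2 * Ψ (x / Real.sqrt 2)
        - Real.sqrt 2 * φ (x / Real.sqrt 2) * x) / T + Real.sqrt 2 * φ (x / Real.sqrt 2))
      atTop (nhds (Real.sqrt 2 * φ (x / Real.sqrt 2))) := by
    have h1 : Tendsto (fun T : ℝ => (2 * Ψ (x / Real.sqrt 2)
        - Real.sqrt 2 * φ (x / Real.sqrt 2) * x) * T⁻¹) atTop (nhds 0) := by
      simpa using tendsto_inv_atTop_zero.const_mul
        (2 * Ψ (x / Real.sqrt 2) - Real.sqrt 2 * φ (x / Real.sqrt 2) * x)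
    simpa [div_eq_mul_inv] using h1.add (tendsto_const_nhds (x := Real.sqrt 2 * φ (x / Real.sqrt 2)) (f := atTop))
  exact hlim.congr' hev
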